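/- Under the assumption 4*a2*a4 > (a1+a3)^2 with a1,...,a4 > 0, let β = (1/2)*sqrt(4*a2*a4 - (a1+a3)^2), and let (z(τ), y(τ)) be the solution of ż = a1 z - a2 y, ẏ = a4 z - a3 y with z(0) = z0 > 0 and y(0) = y' ≥ 0. Then at time τ = π/β one has (z(π/β), y(π/β)) = e^{((a1-a3)/2)·(π/β)} · (−z0, −y'); in particular z(π/β) < z0. Consequently the characteristic curve eventually leaves the region B = {(z,y) : z > z0, y > 0}. -/

import Mathlib

theorem stmt2 (a1 a2 a3 a4 : ℝ) (ha1 : 0 < a1) (ha2 : 0 < a2) (ha3 : 0 < a3)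
    (ha4 : 0 < a4) (h : 4 * a2 * a4 > (a1 + a3) ^ 2)
    (β : ℝ) (hβ : β = (1 / 2) * Real.sqrt (4 * a2 * a4 - (a1 + a3) ^ 2))
    (z0 y' : ℝ) (hz0 : 0 < z0) (hy' : 0 ≤ y')
    (z y : ℝ → ℝ)
    (hzode : ∀ τ : ℝ, HasDerivAt z (a1 * z τ - a2 * y τ) τ)
    (hyode : ∀ τ : ℝ, HasDerivAt y (a4 * z τ - a3 * y τ) τ)
    (hz0' : z 0 = z0) (hy0' : y 0 = y') :
    z (Real.pi / β) = Real.exp ((a1 - a3) / 2 * (Real.pi / β)) * (-z0) ∧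
    y (Real.pi / β) = Real.exp ((a1 - a3) / 2 * (Real.pi / β)) * (-y') ∧
    z (Real.pi / β) < z0 ∧
    (∃ τ : ℝ, 0 < τ ∧ ¬ (z τ > z0 ∧ y τ > 0)) := by
  have hβpos : 0 < β := by
    rw [hβ]
    have : 0 < 4 * a2 * a4 - (a1 + a3) ^ 2 := by linarith
    positivity
  have hβne : (β : ℝ) ≠ 0 := ne_of_gt hβpos
  have hβsq : 4 * β ^ 2 = 4 * a2 * a4 - (a1 + a3) ^ 2 := by
    have h1 : 0 ≤ 4 * a2 * a4 - (a1 + a3) ^ 2 := by linarith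
    rw [hβ, mul_pow, Real.sq_sqrt h1]; ring
  have ha4c : (a4 : ℂ) ≠ 0 := by exact_mod_cast ne_of_gt ha4
  have hβc : (β : ℂ) ≠ 0 := by exact_mod_cast hβne
  set cr : ℝ := -(a1 + a3) / (2 * a4) with hcr
  set ci : ℝ := β / a4 with hci
  set c : ℂ := (cr : ℂ) + (ci : ℂ) * Complex.I with hc
  set l : ℂ := (↑((a1 - a3) / 2) : ℂ) + (↑β : ℂ) * Complex.I with hl
  have hβsqc : (4 : ℂ) * (β : ℂ) ^ 2 = 4 * a2 * a4 - ((a1:ℂ) + a3) ^ 2 := by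
    exact_mod_cast hβsq
  -- quadratic: a4*c^2 + (a1+a3)*c + a2 = 0
  have hquad : (a4 : ℂ) * c ^ 2 + ((a1:ℂ) + a3) * c + (a2 : ℂ) = 0 := by
    set c2 : ℂ := (-((a1:ℂ) + a3)) + 2 * β * Complex.I with hc2
    have hq2 : c2 ^ 2 + 2 * ((a1:ℂ) + a3) * c2 + 4 * a2 * a4 = 0 := by
      rw [hc2]
      linear_combination (4 * (β:ℂ) ^ 2) * Complex.I_sq - hβsqc
    have hd : c = c2 / (2 * a4) := by
      rw [hc, hc2, hcr, hci]
      push_cast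
      field_simp
    have hrw : (a4 : ℂ) * c ^ 2 + ((a1:ℂ) + a3) * c + (a2 : ℂ)
        = (c2 ^ 2 + 2 * ((a1:ℂ) + a3) * c2 + 4 * a2 * a4) / (4 * a4) := by
      rw [hd]
      field_simp
      ring
    rw [hrw, hq2, zero_div]
  -- l = a1 + a4 * c
  have hlc : l = (a1 : ℂ) + (a4 : ℂ) * c := by
    rw [hl, hc, hcr, hci]
    push_cast
    field_simp
    ring
  -- ODE identity
  have hkey : ∀ τ : ℝ, (↑(a1 * z τ - a2 * y τ) : ℂ) + c * (↑(a4 * z τ - a3 * y τ) : ℂ)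
      = l * ((z τ : ℂ) + c * (y τ : ℂ)) := by
    intro τ
    rw [hlc]
    push_cast
    linear_combination (-(y τ : ℂ)) * hquad
  -- constant function
  set F : ℝ → ℂ := fun τ => Complex.exp (-l * τ) * ((z τ : ℂ) + c * (y τ : ℂ)) with hF
  have hFd : ∀ τ : ℝ, HasDerivAt F 0 τ := by
    intro τ
    have hco : HasDerivAt (fun t : ℝ => (t : ℂ)) 1 τ := by
      simpa using (hasDerivAt_id τ).ofReal_comp
    have h1 : HasDerivAt (fun t : ℝ => Complex.exp (-l * t))
        (Complex.exp (-l * τ) * (-l)) τ := by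
      simpa using (hco.const_mul (-l)).cexp
    have h2 : HasDerivAt (fun t : ℝ => ((z t : ℂ) + c * (y t : ℂ)))
        ((↑(a1 * z τ - a2 * y τ) : ℂ) + c * (↑(a4 * z τ - a3 * y τ) : ℂ)) τ :=
      ((hzode τ).ofReal_comp).add (((hyode τ).ofReal_comp).const_mul c)
    have h3 := h1.mul h2
    rw [hkey τ] at h3
    convert h3 using 1
    · rfl
    · rfl
    · ring
  have hFc : F (Real.pi / β) = F 0 :=
    is_const_of_deriv_eq_zero (fun τ => (hFd τ).differentiableAt)
      (fun τ => (hFd τ).deriv) _ _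
  have hF0 : F 0 = (z0 : ℂ) + c * (y' : ℂ) := by
    simp [hF, hz0', hy0']
  set T : ℝ := Real.pi / β with hT
  set E : ℝ := Real.exp ((a1 - a3) / 2 * T) with hE
  have hEpos : 0 < E := Real.exp_pos _
  have hTpos : 0 < T := div_pos Real.pi_pos hβpos
  clear_value T E
  have hexp : Complex.exp (l * (T : ℂ)) = -(E : ℂ) := by
    have hlT : l * (T : ℂ) = (↑((a1 - a3) / 2 * T) : ℂ) + ↑Real.pi * Complex.I := by
      rw [hl, hT]
      push_cast
      field_simp
    rw [hlT, Complex.exp_add, Complex.exp_pi_mul_I, hE, ← Complex.ofReal_exp]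
    ring
  have heq : (z T : ℂ) + c * (y T : ℂ) = -(E : ℂ) * ((z0 : ℂ) + c * (y' : ℂ)) := by
    have h1 : Complex.exp (-l * (T:ℝ)) * ((z T : ℂ) + c * (y T : ℂ))
        = (z0 : ℂ) + c * (y' : ℂ) := hF0 ▸ hFc
    have h2 : Complex.exp (l * T) * (Complex.exp (-l * (T:ℝ)) * ((z T : ℂ) + c * (y T : ℂ)))
        = Complex.exp (l * T) * ((z0 : ℂ) + c * (y' : ℂ)) := by rw [h1]
    rw [← mul_assoc, ← Complex.exp_add] at h2
    simp only [neg_mul, add_neg_cancel, neg_add_cancel, Complex.exp_zero, one_mul] at h2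
    rw [hexp] at h2
    linear_combination h2
  rw [hc] at heq
  have him := congrArg Complex.im heq
  have hre := congrArg Complex.re heq
  simp only [Complex.add_im, Complex.add_re, Complex.mul_im, Complex.mul_re,
    Complex.ofReal_re, Complex.ofReal_im, Complex.I_re, Complex.I_im,
    Complex.neg_re, Complex.neg_im] at him hre
  ring_nf at him hre
  have hcine : ci ≠ 0 := by
    rw [hci]; positivity
  have hy : y T = E * -y' := by
    have h5 : a4⁻¹ * β * y T = a4⁻¹ * β * (E * -y') := by linear_combination him
    exact mul_left_cancel₀ (by positivity) h5
  have hz : z T = E * -z0 := by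
    linear_combination hre + ((a1 + a3) * a4⁻¹ * (1 / 2)) * hy
  refine ⟨hz, hy, ?_, T, hTpos, ?_⟩
  · rw [hz]; nlinarith
  · rintro ⟨h1, -⟩
    rw [hz] at h1
    nlinarith
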